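/- For every k ≥ 2 and every pair u, u' of distinct oriented words of rank k, the positive cones P_u and P_{u'} differ; i.e., there exists g ∈ F_k with τ_u(g) > 0 and τ_{u'}(g) < 0 or vice versa. Hence the (2k)! oriented words of rank k induce (2k)! pairwise distinct left orders on F_k. -/

import Mathlib

open FreeGroup

/-- A letter over the alphabet `{a_1,...,a_k, a_1⁻¹,...,a_k⁻¹}`:
`(i, true)` is the positive letter `a_i`, `(i, false)` is `a_i⁻¹`. -/
abbrev Letter (k : ℕ) := Fin k × Bool

/-- Formal inverse of a letter. -/
def invL {k : ℕ} (x : Letter k) : Letter k := (x.1, !x.2)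

/-- An oriented word of rank `k`: each of the `2k` letters appears exactly once. -/
def IsOriented {k : ℕ} (u : List (Letter k)) : Prop :=
  u.Nodup ∧ ∀ x : Letter k, x ∈ u

/-- `x` occurs to the left of `y` in `u`. -/
def leftOf {k : ℕ} (u : List (Letter k)) (x y : Letter k) : Prop :=
  u.idxOf x < u.idxOf y

instance {k : ℕ} (u : List (Letter k)) (x y : Letter k) : Decidable (leftOf u x y) :=
  inferInstanceAs (Decidable (_ < _))

/-- Number of occurrences of the two-letter word `xy` as a contiguous subword of `L`. -/
def cnt {k : ℕ} (L : List (Letter k)) (x y : Letter k) : ℕ :=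
  (L.zip L.tail).count (x, y)

/-- The case transition weight `α_u`, on a reduced word `L`. -/
noncomputable def alphaW {k : ℕ} (u L : List (Letter k)) : ℝ :=
  (∑ a : Fin k, ∑ b : Fin k,
      if leftOf u (a, false) (b, false) then (cnt L (a, true) (b, false) : ℝ) else 0)
  - ∑ a : Fin k, ∑ b : Fin k,
      if leftOf u (a, true) (b, true) then (cnt L (b, false) (a, true) : ℝ) else 0

/-- The letter transition weight `β_u`, on a reduced word `L`. -/
noncomputable def betaW {k : ℕ} (u L : List (Letter k)) : ℝ :=
  (∑ a : Fin k, ∑ b : Fin k,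
      if leftOf u (a, false) (b, true) then (cnt L (a, true) (b, true) : ℝ) else 0)
  - ∑ a : Fin k, ∑ b : Fin k,
      if leftOf u (a, false) (b, true) then (cnt L (b, false) (a, false) : ℝ) else 0

/-- The last letter weight `ω`, on a reduced word `L`. -/
noncomputable def omegaW {k : ℕ} (L : List (Letter k)) : ℝ :=
  match L.getLast? with
  | none => 0
  | some x => if x.2 then 1 / 2 else -(1 / 2)

/-- The weight `τ_u` induced by an oriented word `u`, evaluated on the reduced form. -/
noncomputable def tau {k : ℕ} (u : List (Letter k)) (g : FreeGroup (Fin k)) : ℝ :=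
  alphaW u g.toWord + betaW u g.toWord + omegaW g.toWord

/-- The weight contribution `wtc_u` of a reduced two-letter word `xy`. -/
noncomputable def wtc {k : ℕ} (u : List (Letter k)) (x y : Letter k) : ℝ :=
  if x.2 then (if leftOf u (x.1, false) y then 1 else 0)
  else (if leftOf u y (x.1, true) then -1 else 0)

/-- The inverse word of `u`. -/
def invWord {k : ℕ} (u : List (Letter k)) : List (Letter k) := (u.map invL).reverse

/-- A function `τ : G → ℝ` with small relative defect. -/
def SmallRelDefect {G : Type*} [Group G] (τ : G → ℝ) : Prop :=
  τ 1 = 0 ∧ ∀ g h : G, (g ≠ 1 ∨ h ≠ 1) → |τ g + τ h - τ (g * h)| < |τ g| + |τ h|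

/-- Reducedness matching `FreeGroup.reduce`'s cancellation test. -/
def Reduced {k : ℕ} (L : List (Letter k)) : Prop :=
  List.Chain' (fun x y => ¬(x.1 = y.1 ∧ x.2 = !y.2)) L

lemma reduce_eq_self {k : ℕ} {L : List (Letter k)} (h : Reduced L) :
    FreeGroup.reduce L = L := by
  induction L with
  | nil => rfl
  | cons x L ih =>
    have hL : FreeGroup.reduce L = L := ih h.tail
    rw [FreeGroup.reduce.cons, hL]
    cases L with
    | nil => rfl
    | cons y t =>
      dsimp only
      rw [if_neg (List.isChain_cons_cons.1 h).1]

lemma toWord_mk_reduced {k : ℕ} {L : List (Letter k)} (h : Reduced L) :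
    (FreeGroup.mk L).toWord = L := by
  rw [FreeGroup.toWord_mk, reduce_eq_self h]

lemma sum_ind {k : ℕ} (P : Fin k → Fin k → Prop) [∀ a b, Decidable (P a b)]
    (e1 e2 : Bool) (z : Letter k × Letter k) :
    (∑ a : Fin k, ∑ b : Fin k,
        if P a b then (if ((a, e1), (b, e2)) = z then (1 : ℝ) else 0) else 0)
      = if z.1.2 = e1 ∧ z.2.2 = e2 ∧ P z.1.1 z.2.1 then 1 else 0 := by
  classical
  obtain ⟨⟨a0, s1⟩, ⟨b0, s2⟩⟩ := z
  rw [Finset.sum_eq_single a0]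
  · rw [Finset.sum_eq_single b0]
    · split_ifs <;> simp_all [Prod.ext_iff]
    · intro b _ hb; split_ifs <;> simp_all [Prod.ext_iff]
    · simp
  · intro a _ ha
    apply Finset.sum_eq_zero
    intro b _
    split_ifs <;> simp_all [Prod.ext_iff]
  · simp

/-- `alphaW + betaW` as a function of the list of transitions. -/
noncomputable def ABz {k : ℕ} (u : List (Letter k)) (Z : List (Letter k × Letter k)) : ℝ :=
  ((∑ a : Fin k, ∑ b : Fin k,
      if leftOf u (a, false) (b, false) then (Z.count ((a, true), (b, false)) : ℝ) else 0)
  - ∑ a : Fin k, ∑ b : Fin k,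
      if leftOf u (a, true) (b, true) then (Z.count ((b, false), (a, true)) : ℝ) else 0)
  + ((∑ a : Fin k, ∑ b : Fin k,
      if leftOf u (a, false) (b, true) then (Z.count ((a, true), (b, true)) : ℝ) else 0)
  - ∑ a : Fin k, ∑ b : Fin k,
      if leftOf u (a, false) (b, true) then (Z.count ((b, false), (a, false)) : ℝ) else 0)

lemma alpha_add_beta {k : ℕ} (u L : List (Letter k)) :
    alphaW u L + betaW u L = ABz u (L.zip L.tail) := by
  simp only [alphaW, betaW, ABz, cnt]

lemma wtc_eq {k : ℕ} (u : List (Letter k)) (x y : Letter k) :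
    wtc u x y
      = ((if x.2 = true ∧ y.2 = false ∧ leftOf u (x.1, false) (y.1, false) then (1:ℝ) else 0)
        - (if x.2 = false ∧ y.2 = true ∧ leftOf u (y.1, true) (x.1, true) then 1 else 0))
      + ((if x.2 = true ∧ y.2 = true ∧ leftOf u (x.1, false) (y.1, true) then 1 else 0)
        - (if x.2 = false ∧ y.2 = false ∧ leftOf u (y.1, false) (x.1, true) then 1 else 0)) := by
  obtain ⟨x1, x2⟩ := x; obtain ⟨y1, y2⟩ := y
  cases x2 <;> cases y2 <;> simp [wtc] <;> split_ifs <;> ring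

lemma if_add_split (c : Prop) [Decidable c] (a b : ℝ) :
    (if c then a + b else 0) = (if c then a else 0) + (if c then b else 0) := by
  split_ifs <;> simp

lemma ABz_eq {k : ℕ} (u : List (Letter k)) (Z : List (Letter k × Letter k)) :
    ABz u Z = (Z.map fun z => wtc u z.1 z.2).sum := by
  induction Z with
  | nil => simp [ABz]
  | cons z Z ih =>
    have hcount : ∀ (x : Letter k × Letter k),
        (((z :: Z).count x : ℕ) : ℝ) = (if x = z then 1 else 0) + (Z.count x : ℝ) := by
      intro x
      by_cases h : x = z <;> simp [List.count_cons, h, add_comm] <;> exact Ne.symm h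
    have h1 : (∑ a : Fin k, ∑ b : Fin k, if leftOf u (a, false) (b, false) then
          (if ((a, true), (b, false)) = z then (1:ℝ) else 0) else 0)
        = if z.1.2 = true ∧ z.2.2 = false ∧ leftOf u (z.1.1, false) (z.2.1, false) then 1 else 0 :=
      sum_ind (fun a b => leftOf u (a, false) (b, false)) true false z
    have h2 : (∑ a : Fin k, ∑ b : Fin k, if leftOf u (a, true) (b, true) then
          (if ((b, false), (a, true)) = z then (1:ℝ) else 0) else 0)
        = if z.1.2 = false ∧ z.2.2 = true ∧ leftOf u (z.2.1, true) (z.1.1, true) then 1 else 0 := by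
      rw [Finset.sum_comm]
      exact sum_ind (fun x y => leftOf u (y, true) (x, true)) false true z
    have h3 : (∑ a : Fin k, ∑ b : Fin k, if leftOf u (a, false) (b, true) then
          (if ((a, true), (b, true)) = z then (1:ℝ) else 0) else 0)
        = if z.1.2 = true ∧ z.2.2 = true ∧ leftOf u (z.1.1, false) (z.2.1, true) then 1 else 0 :=
      sum_ind (fun a b => leftOf u (a, false) (b, true)) true true z
    have h4 : (∑ a : Fin k, ∑ b : Fin k, if leftOf u (a, false) (b, true) then
          (if ((b, false), (a, false)) = z then (1:ℝ) else 0) else 0)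
        = if z.1.2 = false ∧ z.2.2 = false ∧ leftOf u (z.2.1, false) (z.1.1, true) then 1 else 0 := by
      rw [Finset.sum_comm]
      exact sum_ind (fun x y => leftOf u (y, false) (x, true)) false false z
    rw [List.map_cons, List.sum_cons, ← ih, wtc_eq]
    simp only [ABz, hcount, if_add_split, Finset.sum_add_distrib]
    rw [h1, h2, h3, h4]
    ring

lemma tau_mk {k : ℕ} (u : List (Letter k)) {L : List (Letter k)} (h : Reduced L) :
    tau u (FreeGroup.mk L)
      = ((L.zip L.tail).map fun z => wtc u z.1 z.2).sum + omegaW L := by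
  show alphaW u _ + betaW u _ + omegaW _ = _
  rw [toWord_mk_reduced h, alpha_add_beta, ABz_eq]

lemma omega_cons {k : ℕ} (x y : Letter k) (L : List (Letter k)) :
    omegaW (x :: y :: L) = omegaW (y :: L) := by
  simp [omegaW, List.getLast?]

lemma omega_single {k : ℕ} (x : Letter k) :
    omegaW [x] = if x.2 then 1 / 2 else -(1 / 2) := rfl

lemma constr1 {k : ℕ} (u u' : List (Letter k)) (a b : Fin k) (hab : a ≠ b)
    (h : leftOf u (a, false) (b, false)) (h' : ¬ leftOf u' (a, false) (b, false)) :
    ∃ g : FreeGroup (Fin k), 0 < tau u g ∧ tau u' g < 0 := by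
  have hred : Reduced [(a, true), (b, false)] := by
    simp [Reduced, List.Chain', hab]
  refine ⟨FreeGroup.mk [(a, true), (b, false)], ?_, ?_⟩ <;>
    rw [tau_mk _ hred] <;>
    simp [wtc, omega_cons, omega_single, h, h'] <;> norm_num

lemma constr2 {k : ℕ} (u u' : List (Letter k)) (a b : Fin k) (hab : a ≠ b)
    (h : leftOf u (a, true) (b, true)) (h' : ¬ leftOf u' (a, true) (b, true)) :
    ∃ g : FreeGroup (Fin k), tau u g < 0 ∧ 0 < tau u' g := by
  have hred : Reduced [(b, false), (a, true)] := by
    simp [Reduced, List.Chain', hab.symm]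
  refine ⟨FreeGroup.mk [(b, false), (a, true)], ?_, ?_⟩ <;>
    rw [tau_mk _ hred] <;>
    simp [wtc, omega_cons, omega_single, h, h'] <;> norm_num

lemma constr3a {k : ℕ} (u u' : List (Letter k)) (x y z : Fin k) (hzy : z ≠ y)
    (hc : leftOf u (x, false) (y, true)) (hc' : ¬ leftOf u' (x, false) (y, true))
    (hz : ¬ leftOf u (y, false) (z, false)) (hz' : ¬ leftOf u' (y, false) (z, false)) :
    ∃ g : FreeGroup (Fin k), 0 < tau u g ∧ tau u' g < 0 := by
  have hred : Reduced [(x, true), (y, true), (z, false)] := by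
    simp [Reduced, List.Chain', hzy.symm]
  refine ⟨FreeGroup.mk [(x, true), (y, true), (z, false)], ?_, ?_⟩ <;>
    rw [tau_mk _ hred] <;>
    simp [wtc, omega_cons, omega_single, hc, hc', hz, hz'] <;> norm_num

lemma constr3b {k : ℕ} (u u' : List (Letter k)) (x y z : Fin k) (hzx : z ≠ x)
    (hc : leftOf u (x, false) (y, true)) (hc' : ¬ leftOf u' (x, false) (y, true))
    (hh : leftOf u (x, true) (z, true)) (hh' : leftOf u' (x, true) (z, true)) :
    ∃ g : FreeGroup (Fin k), 0 < tau u g ∧ tau u' g < 0 := by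
  have hred : Reduced [(z, false), (x, true), (y, true)] := by
    simp [Reduced, List.Chain', hzx]
  refine ⟨FreeGroup.mk [(z, false), (x, true), (y, true)], ?_, ?_⟩ <;>
    rw [tau_mk _ hred] <;>
    simp [wtc, omega_cons, omega_single, hc, hc', hh, hh'] <;> norm_num

lemma constr3ci {k : ℕ} (u u' : List (Letter k)) (x y : Fin k) (hxy : x ≠ y)
    (hc : leftOf u (x, false) (y, true)) (hc' : ¬ leftOf u' (x, false) (y, true))
    (h1 : leftOf u (y, false) (x, false)) (h1' : leftOf u' (y, false) (x, false))
    (h2 : leftOf u (y, false) (x, true)) (h2' : leftOf u' (y, false) (x, true)) :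
    ∃ g : FreeGroup (Fin k), 0 < tau u g ∧ tau u' g < 0 := by
  have hred : Reduced [(x, true), (y, true), (x, false), (y, false)] := by
    simp [Reduced, List.Chain', hxy.symm]
  refine ⟨FreeGroup.mk [(x, true), (y, true), (x, false), (y, false)], ?_, ?_⟩ <;>
    rw [tau_mk _ hred] <;>
    simp [wtc, omega_cons, omega_single, hc, hc', h1, h1', h2, h2'] <;> norm_num

lemma constr3cii0 {k : ℕ} (u u' : List (Letter k)) (x z : Fin k) (hzx : z ≠ x)
    (hc : leftOf u (x, false) (x, true)) (hc' : ¬ leftOf u' (x, false) (x, true))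
    (hs : ¬ leftOf u (x, false) (z, true)) (hs' : ¬ leftOf u' (x, false) (z, true))
    (ht : ¬ leftOf u (z, false) (x, false)) (ht' : ¬ leftOf u' (z, false) (x, false)) :
    ∃ g : FreeGroup (Fin k), 0 < tau u g ∧ tau u' g < 0 := by
  have hred : Reduced [(x, true), (x, true), (z, true), (x, false)] := by
    simp [Reduced, List.Chain', hzx]
  refine ⟨FreeGroup.mk [(x, true), (x, true), (z, true), (x, false)], ?_, ?_⟩ <;>
    rw [tau_mk _ hred] <;>
    simp [wtc, omega_cons, omega_single, hc, hc', hs, hs', ht, ht'] <;> norm_num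

lemma constr3cii1 {k : ℕ} (u u' : List (Letter k)) (x z : Fin k) (hzx : z ≠ x)
    (hc : leftOf u (x, false) (x, true)) (hc' : ¬ leftOf u' (x, false) (x, true))
    (hs : leftOf u (x, false) (z, true)) (hs' : leftOf u' (x, false) (z, true))
    (ht : ¬ leftOf u (z, false) (x, false)) (ht' : ¬ leftOf u' (z, false) (x, false)) :
    ∃ g : FreeGroup (Fin k), tau u g < 0 ∧ 0 < tau u' g := by
  have hred : Reduced [(x, true), (z, true), (x, false), (x, false)] := by
    simp [Reduced, List.Chain', hzx]
  refine ⟨FreeGroup.mk [(x, true), (z, true), (x, false), (x, false)], ?_, ?_⟩ <;>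
    rw [tau_mk _ hred] <;>
    simp [wtc, omega_cons, omega_single, hc, hc', hs, hs', ht, ht'] <;> norm_num

lemma beqLetter_eq {k : ℕ} :
    (instBEqProd : BEq (Letter k)) = instBEqOfDecidableEq := by
  have key : ∀ (i1 i2 : BEq (Letter k)), i1.beq = i2.beq → i1 = i2 := by
    rintro ⟨f⟩ ⟨g⟩ h
    cases h; rfl
  apply key
  funext a b
  show (a == b) = decide (a = b)
  by_cases h : a = b
  · subst h; simp
  · simp [h, beq_eq_false_iff_ne, Ne, h]

lemma leftOf_iff {k : ℕ} (u : List (Letter k)) (x y : Letter k) :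
    leftOf u x y ↔
      @List.idxOf (Letter k) instBEqOfDecidableEq x u
        < @List.idxOf (Letter k) instBEqOfDecidableEq y u := by
  unfold leftOf
  rw [beqLetter_eq]

lemma leftOf_total {k : ℕ} {u : List (Letter k)} (hu : IsOriented u) {p q : Letter k}
    (hpq : p ≠ q) : leftOf u p q ∨ leftOf u q p := by
  rcases Nat.lt_trichotomy (@List.idxOf (Letter k) instBEqOfDecidableEq p u)
      (@List.idxOf (Letter k) instBEqOfDecidableEq q u) with h | h | h
  · exact .inl ((leftOf_iff u p q).2 h)
  · exact absurd ((@List.idxOf_inj _ instBEqOfDecidableEq _ _ _ _ (hu.2 p)).1 h) hpq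
  · exact .inr ((leftOf_iff u q p).2 h)

lemma leftOf_asymm {k : ℕ} {u : List (Letter k)} {p q : Letter k}
    (h : leftOf u p q) : ¬ leftOf u q p := Nat.lt_asymm h

lemma leftOf_trans {k : ℕ} {u : List (Letter k)} {p q r : Letter k}
    (h : leftOf u p q) (h' : leftOf u q r) : leftOf u p r := Nat.lt_trans h h'

lemma first_diff {α : Type*} :
    ∀ (l l' : List α), l.length = l'.length → l ≠ l' →
      ∃ w x x' t t', x ≠ x' ∧ l = w ++ x :: t ∧ l' = w ++ x' :: t'
  | [], [], _, hne => absurd rfl hne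
  | [], _ :: _, h, _ => by simp at h
  | _ :: _, [], h, _ => by simp at h
  | x :: t, x' :: t', h, hne => by
    by_cases hx : x = x'
    · subst hx
      have ht : t ≠ t' := fun hh => hne (by rw [hh])
      obtain ⟨w, y, y', s, s', h1, h2, h3⟩ := first_diff t t' (by simpa using h) ht
      exact ⟨x :: w, y, y', s, s', h1, by simp [h2], by simp [h3]⟩
    · exact ⟨[], x, x', t, t', hx, rfl, rfl⟩

lemma leftOf_split {k : ℕ} {w t : List (Letter k)} {x : Letter k}
    (hnd : (w ++ x :: t).Nodup) {y : Letter k} (hyw : y ∉ w) (hyx : y ≠ x) :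
    leftOf (w ++ x :: t) x y := by
  have hxw : x ∉ w := by
    intro hx
    exact (List.disjoint_of_nodup_append hnd) hx List.mem_cons_self
  unfold leftOf
  rw [List.idxOf_append_of_notMem hxw, List.idxOf_append_of_notMem hyw,
    List.idxOf_cons_self, List.idxOf_cons_ne _ (Ne.symm hyx)]
  omega

lemma exists_disagree {k : ℕ} {u u' : List (Letter k)}
    (hu : IsOriented u) (hu' : IsOriented u') (hne : u ≠ u') :
    ∃ p q : Letter k, p ≠ q ∧ leftOf u p q ∧ leftOf u' q p := by
  have hlen : ∀ (v : List (Letter k)), IsOriented v → v.length = (Finset.univ : Finset (Letter k)).card := by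
    intro v hv
    rw [← List.toFinset_card_of_nodup hv.1]
    congr 1
    exact Finset.eq_univ_iff_forall.2 (fun x => List.mem_toFinset.2 (hv.2 x))
  obtain ⟨w, p, q, t, t', hpq, h1, h2⟩ :=
    first_diff u u' ((hlen u hu).trans (hlen u' hu').symm) hne
  refine ⟨p, q, hpq, ?_, ?_⟩
  · rw [h1]
    apply leftOf_split (h1 ▸ hu.1) _ (Ne.symm hpq)
    intro hqw
    exact (List.disjoint_of_nodup_append (h2 ▸ hu'.1)) hqw List.mem_cons_self
  · rw [h2]
    apply leftOf_split (h2 ▸ hu'.1) _ hpq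
    intro hpw
    exact (List.disjoint_of_nodup_append (h1 ▸ hu.1)) hpw List.mem_cons_self

/-- The mixed case: all same-sign comparisons agree, and the mixed comparison
`(x,false) < (y,true)` holds in `u` but not in `u'`. -/
lemma mixed {k : ℕ} (hk : 2 ≤ k) {u u' : List (Letter k)}
    (hu : IsOriented u) (hu' : IsOriented u')
    (hNN : ∀ a b : Fin k, leftOf u (a, false) (b, false) ↔ leftOf u' (a, false) (b, false))
    (hPP : ∀ a b : Fin k, leftOf u (a, true) (b, true) ↔ leftOf u' (a, true) (b, true))
    (x y : Fin k)
    (hc : leftOf u (x, false) (y, true)) (hc' : ¬ leftOf u' (x, false) (y, true)) :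
    ∃ g : FreeGroup (Fin k),
      (0 < tau u g ∧ tau u' g < 0) ∨ (tau u g < 0 ∧ 0 < tau u' g) := by
  classical
  by_cases h3a : ∃ z, z ≠ y ∧ leftOf u (z, false) (y, false)
  · obtain ⟨z, hzy, hz⟩ := h3a
    obtain ⟨g, hg1, hg2⟩ := constr3a u u' x y z hzy hc hc'
      (leftOf_asymm hz) (leftOf_asymm ((hNN z y).1 hz))
    exact ⟨g, .inl ⟨hg1, hg2⟩⟩
  by_cases h3b : ∃ z, z ≠ x ∧ leftOf u (x, true) (z, true)
  · obtain ⟨z, hzx, hz⟩ := h3b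
    obtain ⟨g, hg1, hg2⟩ := constr3b u u' x y z hzx hc hc' hz ((hPP x z).1 hz)
    exact ⟨g, .inl ⟨hg1, hg2⟩⟩
  push_neg at h3a h3b
  -- (y, false) is the minimal negative letter, (x, true) the maximal positive letter
  have hmin : ∀ z, z ≠ y → leftOf u (y, false) (z, false) := by
    intro z hz
    rcases leftOf_total hu (p := (y, false)) (q := (z, false))
        (by simp [Prod.ext_iff, Ne.symm hz]) with h | h
    · exact h
    · exact absurd h (h3a z hz)
  have hmax : ∀ z, z ≠ x → leftOf u (z, true) (x, true) := by
    intro z hz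
    rcases leftOf_total hu (p := (z, true)) (q := (x, true))
        (by simp [Prod.ext_iff, hz]) with h | h
    · exact h
    · exact absurd h (h3b z hz)
  by_cases hxy : x = y
  · subst hxy
    -- pick z ≠ x
    have : Nontrivial (Fin k) := Fin.nontrivial_iff_two_le.2 hk
    obtain ⟨z, hzx⟩ := exists_ne x
    have ht : ¬ leftOf u (z, false) (x, false) := h3a z hzx
    have ht' : ¬ leftOf u' (z, false) (x, false) := fun h => ht ((hNN z x).2 h)
    by_cases hs : leftOf u (x, false) (z, true)
    · by_cases hs' : leftOf u' (x, false) (z, true)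
      · obtain ⟨g, hg1, hg2⟩ := constr3cii1 u u' x z hzx hc hc' hs hs' ht ht'
        exact ⟨g, .inr ⟨hg1, hg2⟩⟩
      ·
        obtain ⟨g, hg1, hg2⟩ := constr3a u u' x z x (Ne.symm hzx) hs hs'
          (leftOf_asymm (hmin z hzx)) (leftOf_asymm ((hNN x z).1 (hmin z hzx)))
        exact ⟨g, .inl ⟨hg1, hg2⟩⟩
    · by_cases hs' : leftOf u' (x, false) (z, true)
      · -- entry (x,z) disagrees (u no, u' yes)
        obtain ⟨g, hg1, hg2⟩ := constr3a u' u x z x (Ne.symm hzx) hs' hs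
          (leftOf_asymm ((hNN x z).1 (hmin z hzx))) (leftOf_asymm (hmin z hzx))
        exact ⟨g, .inr ⟨hg2, hg1⟩⟩
      · obtain ⟨g, hg1, hg2⟩ := constr3cii0 u u' x z hzx hc hc' hs hs' ht ht'
        exact ⟨g, .inl ⟨hg1, hg2⟩⟩
  · -- x ≠ y
    have h1 : leftOf u (y, false) (x, false) := hmin x hxy
    have h1' : leftOf u' (y, false) (x, false) := (hNN y x).1 h1
    have h2 : leftOf u (y, false) (x, true) := leftOf_trans h1 (leftOf_trans hc (hmax y (Ne.symm hxy)))
    by_cases h2' : leftOf u' (y, false) (x, true)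
    · obtain ⟨g, hg1, hg2⟩ := constr3ci u u' x y hxy hc hc' h1 h1' h2 h2'
      exact ⟨g, .inl ⟨hg1, hg2⟩⟩
    · -- entry (y,x) disagrees (u yes, u' no); use constr3b with helper x
      obtain ⟨g, hg1, hg2⟩ := constr3b u u' y x x hxy h2 h2'
        (hmax y (Ne.symm hxy)) ((hPP y x).1 (hmax y (Ne.symm hxy)))
      exact ⟨g, .inl ⟨hg1, hg2⟩⟩

theorem stmt16 {k : ℕ} (hk : 2 ≤ k) (u u' : List (Letter k))
    (hu : IsOriented u) (hu' : IsOriented u') (hne : u ≠ u') :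
    ∃ g : FreeGroup (Fin k),
      (0 < tau u g ∧ tau u' g < 0) ∨ (tau u g < 0 ∧ 0 < tau u' g) := by
  classical
  obtain ⟨p, q, hpq, h1, h2⟩ := exists_disagree hu hu' hne
  have h2' : ¬ leftOf u' p q := leftOf_asymm h2
  by_cases hNN : ∀ a b : Fin k, leftOf u (a, false) (b, false) ↔ leftOf u' (a, false) (b, false)
  · by_cases hPP : ∀ a b : Fin k, leftOf u (a, true) (b, true) ↔ leftOf u' (a, true) (b, true)
    · obtain ⟨p1, pb⟩ := p
      obtain ⟨q1, qb⟩ := q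
      cases pb <;> cases qb
      · exact absurd ((hNN p1 q1).1 h1) h2'
      · exact mixed hk hu hu' hNN hPP p1 q1 h1 h2'
      · have hNN' : ∀ a b : Fin k,
            leftOf u' (a, false) (b, false) ↔ leftOf u (a, false) (b, false) :=
          fun a b => (hNN a b).symm
        have hPP' : ∀ a b : Fin k,
            leftOf u' (a, true) (b, true) ↔ leftOf u (a, true) (b, true) :=
          fun a b => (hPP a b).symm
        obtain ⟨g, hg⟩ := mixed hk hu' hu hNN' hPP' q1 p1 h2 (leftOf_asymm h1)
        rcases hg with ⟨c1, c2⟩ | ⟨c1, c2⟩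
        · exact ⟨g, .inr ⟨c2, c1⟩⟩
        · exact ⟨g, .inl ⟨c2, c1⟩⟩
      · exact absurd ((hPP p1 q1).1 h1) h2'
    · simp only [not_forall] at hPP
      obtain ⟨a, b, hab⟩ := hPP
      by_cases h : leftOf u (a, true) (b, true)
      · have h' : ¬ leftOf u' (a, true) (b, true) := fun hh => hab (iff_of_true h hh)
        have hne' : a ≠ b := by
          rintro rfl
          exact absurd h (Nat.lt_irrefl _)
        obtain ⟨g, hg1, hg2⟩ := constr2 u u' a b hne' h h'
        exact ⟨g, .inr ⟨hg1, hg2⟩⟩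
      · have h' : leftOf u' (a, true) (b, true) := by
          by_contra hh
          exact hab (iff_of_false h hh)
        have hne' : a ≠ b := by
          rintro rfl
          exact absurd h' (Nat.lt_irrefl _)
        obtain ⟨g, hg1, hg2⟩ := constr2 u' u a b hne' h' h
        exact ⟨g, .inl ⟨hg2, hg1⟩⟩
  · simp only [not_forall] at hNN
    obtain ⟨a, b, hab⟩ := hNN
    by_cases h : leftOf u (a, false) (b, false)
    · have h' : ¬ leftOf u' (a, false) (b, false) := fun hh => hab (iff_of_true h hh)
      have hne' : a ≠ b := by
        rintro rfl
        exact absurd h (Nat.lt_irrefl _)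
      obtain ⟨g, hg1, hg2⟩ := constr1 u u' a b hne' h h'
      exact ⟨g, .inl ⟨hg1, hg2⟩⟩
    · have h' : leftOf u' (a, false) (b, false) := by
        by_contra hh
        exact hab (iff_of_false h hh)
      have hne' : a ≠ b := by
        rintro rfl
        exact absurd h' (Nat.lt_irrefl _)
      obtain ⟨g, hg1, hg2⟩ := constr1 u' u a b hne' h' h
      exact ⟨g, .inr ⟨hg2, hg1⟩⟩
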